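/- Let L be a complete modular lattice which is Artinian. Define the iterated radical r : ℕ → L by r(0) = ⊤ and r(n+1) = the infimum of the set of all coatoms of the interval [⊥, r(n)], i.e., the infimum of { m ∈ L : m < r(n) and there is no x with m < x < r(n) }. If there exists n ∈ ℕ with r(n) = ⊥ (i.e., L is hyper-radical free), then L is Noetherian. -/

import Mathlib

open Set

section aux

variable {L : Type*} [Lattice L] [IsModularLattice L]

private theorem wfgt_of_finite {s : Set L} (hs : s.Finite) :
    WellFounded ((· > ·) : s → s → Prop) := by
  have : Finite s := hs
  exact Finite.wellFounded_of_trans_of_irrefl _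

private theorem wfgt_of_orderIso {α β : Type*} [Preorder α] [Preorder β] (e : α ≃o β)
    (h : WellFounded ((· > ·) : β → β → Prop)) :
    WellFounded ((· > ·) : α → α → Prop) :=
  RelEmbedding.wellFounded ⟨e.toEquiv.toEmbedding, by simp⟩ h

/-- Gluing: if `[a,b]` and `[b,c]` are Noetherian, so is `[a,c]` (modularity used). -/
private theorem wfgt_glue {a b c : L} (hab : a ≤ b) (hbc : b ≤ c)
    (h1 : WellFounded ((· > ·) : Icc a b → Icc a b → Prop))
    (h2 : WellFounded ((· > ·) : Icc b c → Icc b c → Prop)) :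
    WellFounded ((· > ·) : Icc a c → Icc a c → Prop) := by
  replace h1 := (wellFoundedGT_iff_monotone_chain_condition (α := Icc a b)).1 ⟨h1⟩
  replace h2 := (wellFoundedGT_iff_monotone_chain_condition (α := Icc b c)).1 ⟨h2⟩
  refine ((wellFoundedGT_iff_monotone_chain_condition (α := Icc a c)).2 ?_).wf
  intro f
  set g : ℕ →o Icc b c :=
    ⟨fun n => ⟨(f n : L) ⊔ b, le_sup_right, sup_le (f n).2.2 hbc⟩,
      fun m n hmn => sup_le_sup_right (show (f m : L) ≤ f n from f.monotone hmn) b⟩ with hg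
  set h : ℕ →o Icc a b :=
    ⟨fun n => ⟨(f n : L) ⊓ b, le_inf (f n).2.1 hab, inf_le_right⟩,
      fun m n hmn => inf_le_inf_right b (show (f m : L) ≤ f n from f.monotone hmn)⟩ with hh
  obtain ⟨N1, hN1⟩ := h2 g
  obtain ⟨N2, hN2⟩ := h1 h
  refine ⟨max N1 N2, fun m hm => ?_⟩
  have e1 : (f (max N1 N2) : L) ⊔ b = (f m : L) ⊔ b :=
    congrArg Subtype.val ((hN1 (max N1 N2) (le_max_left _ _)).symm.trans
      (hN1 m ((le_max_left _ _).trans hm)))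
  have e2 : (f (max N1 N2) : L) ⊓ b = (f m : L) ⊓ b :=
    congrArg Subtype.val ((hN2 (max N1 N2) (le_max_right _ _)).symm.trans
      (hN2 m ((le_max_right _ _).trans hm)))
  exact Subtype.ext (eq_of_le_of_inf_le_of_sup_le (f.monotone hm) e2.ge e1.ge)

/-- If `m` is a coatom of `[⊥, t]` and `c ≤ t`, then `[c ⊓ m, c]` is Noetherian. -/
private theorem wfgt_coatom {c t m : L} (hct : c ≤ t) (hmt : m < t)
    (hco : ¬ ∃ x, m < x ∧ x < t) :
    WellFounded ((· > ·) : Icc (c ⊓ m) c → Icc (c ⊓ m) c → Prop) := by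
  by_cases hcm : c ≤ m
  · have hcc : c ⊓ m = c := inf_eq_left.2 hcm
    rw [hcc, Icc_self]
    exact wfgt_of_finite (finite_singleton c)
  · have hsup : c ⊔ m = t := by
      rcases lt_or_eq_of_le (sup_le hct hmt.le) with h | h
      · exact absurd ⟨c ⊔ m, lt_of_le_of_ne le_sup_right (fun e => hcm (e ▸ le_sup_left)),
          h⟩ hco
      · exact h
    refine wfgt_of_orderIso (infIccOrderIsoIccSup c m) ?_
    rw [hsup]
    refine wfgt_of_finite ((finite_singleton m).insert t |>.subset ?_)
    intro x hx
    rcases eq_or_lt_of_le hx.1 with h | h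
    · exact Or.inr h.symm
    · rcases eq_or_lt_of_le hx.2 with h' | h'
      · exact Or.inl h'
      · exact absurd ⟨x, h, h'⟩ hco

end aux

/-- A complete modular Artinian lattice which is hyper-radical free is Noetherian.
Here `r 0 = ⊤` and `r (n+1)` is the infimum, inside the interval `[⊥, r n]`, of the
set of coatoms of that interval (so `r (n+1) = r n` if there are no such coatoms). -/
theorem stmt_7 {L : Type*} [CompleteLattice L] [IsModularLattice L]
    (hart : WellFounded ((· < ·) : L → L → Prop))
    (r : ℕ → L) (h0 : r 0 = ⊤)
    (hsucc : ∀ n, r (n + 1) = r n ⊓ sInf {m : L | m < r n ∧ ¬ ∃ x, m < x ∧ x < r n})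
    (hfree : ∃ n, r n = ⊥) :
    WellFounded ((· > ·) : L → L → Prop) := by
  have key : ∀ n, WellFounded ((· > ·) : Icc (r n) ⊤ → Icc (r n) ⊤ → Prop) := by
    intro n
    induction n with
    | zero =>
      rw [h0, Icc_self]
      exact wfgt_of_finite (finite_singleton _)
    | succ n ih =>
      set S : Set L := {m : L | m < r n ∧ ¬ ∃ x, m < x ∧ x < r n} with hS
      set U : Set L := {x : L | r n ⊓ sInf S ≤ x ∧ x ≤ r n ∧
        WellFounded ((· > ·) : Icc x (r n) → Icc x (r n) → Prop)} with hU
      have hUne : (U : Set L).Nonempty := by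
        refine ⟨r n, inf_le_left, le_rfl, ?_⟩
        rw [Icc_self]
        exact wfgt_of_finite (finite_singleton _)
      obtain ⟨u, hu, hmin⟩ := hart.has_min U hUne
      have hum : ∀ m ∈ S, u ≤ m := by
        intro m hm
        have hmem : u ⊓ m ∈ U := by
          refine ⟨le_inf hu.1 (inf_le_right.trans (sInf_le hm)),
            inf_le_left.trans hu.2.1, ?_⟩
          exact wfgt_glue inf_le_left hu.2.1 (wfgt_coatom hu.2.1 hm.1 hm.2) hu.2.2
        rcases lt_or_eq_of_le (inf_le_left : u ⊓ m ≤ u) with h | h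
        · exact absurd h (hmin _ hmem)
        · exact h ▸ inf_le_right
      have hueq : u = r (n + 1) := by
        rw [hsucc n]
        exact le_antisymm (le_inf hu.2.1 (le_sInf hum)) hu.1
      have hwf : WellFounded ((· > ·) : Icc (r (n+1)) (r n) → Icc (r (n+1)) (r n) → Prop) :=
        hueq ▸ hu.2.2
      exact wfgt_glue (hueq ▸ hu.2.1) le_top hwf ih
  obtain ⟨N, hN⟩ := hfree
  have := key N
  rw [hN] at this
  exact RelEmbedding.wellFounded
    ⟨⟨fun x => (⟨x, bot_le, le_top⟩ : Icc (⊥ : L) ⊤), fun a b h => congrArg Subtype.val h⟩,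
      Iff.rfl⟩ this
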